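/- Let p0, p3 ≥ 0 with p0 + p3 > 0, and let κ = (p0−p3)/(p0+p3), α² = p0/(p0+p3), β² = p3/(p0+p3). For every Bloch vector (x,y,z) with x² + y² + z² ≤ 1, the coherent information of the channel Λ0 satisfies S(Λ0(ρ(x,y,z))) − S(Λ0^c(ρ(x,y,z))) = h(½(1 + √(κ²(x²+y²) + z²))) − h(½(1 + √((α²−β²)² + 4α²β² z²))) ≤ 1 − h(p0/(p0+p3)), with equality at (x,y,z) = (0,0,0). Hence max_ρ [S(Λ0(ρ)) − S(Λ0^c(ρ))] = 1 − h(p0/(p0+p3)). -/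

import Mathlib

open Matrix

noncomputable section

/-- Pauli matrix X. -/
def PX : Matrix (Fin 2) (Fin 2) ℂ := !![0, 1; 1, 0]

/-- Pauli matrix Y. -/
def PY : Matrix (Fin 2) (Fin 2) ℂ := !![0, -Complex.I; Complex.I, 0]

/-- Pauli matrix Z. -/
def PZ : Matrix (Fin 2) (Fin 2) ℂ := !![1, 0; 0, -1]

/-- The covariant Pauli channel `Λ(ρ) = p₀ ρ + p₁ (XρX + YρY) + p₃ ZρZ`. -/
def pauliChannel (p0 p1 p3 : ℝ) (ρ : Matrix (Fin 2) (Fin 2) ℂ) : Matrix (Fin 2) (Fin 2) ℂ :=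
  (p0 : ℂ) • ρ + (p1 : ℂ) • (PX * ρ * PX + PY * ρ * PY) + (p3 : ℂ) • (PZ * ρ * PZ)

/-- The qubit state with Bloch vector `(x, y, z)`. -/
def blochState (x y z : ℝ) : Matrix (Fin 2) (Fin 2) ℂ :=
  (1 / 2 : ℂ) • ((1 : Matrix (Fin 2) (Fin 2) ℂ) + (x : ℂ) • PX + (y : ℂ) • PY + (z : ℂ) • PZ)

/-- Von Neumann entropy (base-2) of a Hermitian matrix, via its eigenvalues. -/
def vN {n : ℕ} (A : Matrix (Fin n) (Fin n) ℂ) : ℝ :=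
  if h : A.IsHermitian then -∑ i, h.eigenvalues i * Real.logb 2 (h.eigenvalues i) else 0

/-- Multiset of eigenvalues (with multiplicity) of a Hermitian matrix. -/
def eigs {n : ℕ} (A : Matrix (Fin n) (Fin n) ℂ) : Multiset ℝ :=
  if h : A.IsHermitian then Finset.univ.val.map h.eigenvalues else 0

/-- The binary entropy function `h(t) = -t log₂ t - (1-t) log₂ (1-t)`. -/
def binEnt (t : ℝ) : ℝ := -(t * Real.logb 2 t) - (1 - t) * Real.logb 2 (1 - t)

/-- The dephasing-type channel `Λ₀(ρ) = (p₀ ρ + p₃ ZρZ)/(p₀+p₃)`. -/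
def lam0 (p0 p3 : ℝ) (ρ : Matrix (Fin 2) (Fin 2) ℂ) : Matrix (Fin 2) (Fin 2) ℂ :=
  ((p0 / (p0 + p3) : ℝ) : ℂ) • ρ + ((p3 / (p0 + p3) : ℝ) : ℂ) • (PZ * ρ * PZ)

/-- The complementary channel of `Λ₀`, applied to the Bloch state `ρ(x,y,z)`. -/
def lam0c (p0 p3 z : ℝ) : Matrix (Fin 2) (Fin 2) ℂ :=
  !![((p0 / (p0 + p3) : ℝ) : ℂ), ((Real.sqrt (p0 * p3) / (p0 + p3) * z : ℝ) : ℂ);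
     ((Real.sqrt (p0 * p3) / (p0 + p3) * z : ℝ) : ℂ), ((p3 / (p0 + p3) : ℝ) : ℂ)]

lemma trace_eq_sum_eigs {n : Type*} [Fintype n] [DecidableEq n] {A : Matrix n n ℂ}
    (hA : A.IsHermitian) : A.trace = ∑ i, (hA.eigenvalues i : ℂ) := by
  conv_lhs => rw [hA.spectral_theorem, Unitary.conjStarAlgAut_apply]
  rw [Matrix.trace_mul_cycle]
  rw [show (star (hA.eigenvectorUnitary : Matrix n n ℂ)) * (hA.eigenvectorUnitary : Matrix n n ℂ)
      = 1 from Unitary.coe_star_mul_self hA.eigenvectorUnitary]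
  simp [Matrix.trace_diagonal]

lemma vN_eq_binEnt {A : Matrix (Fin 2) (Fin 2) ℂ} (hA : A.IsHermitian) (d : ℝ)
    (htr : A.trace = 1) (hdet : A.det = (d : ℝ)) :
    vN A = binEnt ((1 + Real.sqrt (1 - 4 * d)) / 2) := by
  have hsum : hA.eigenvalues 0 + hA.eigenvalues 1 = 1 := by
    have := trace_eq_sum_eigs hA
    rw [htr, Fin.sum_univ_two] at this
    exact_mod_cast this.symm
  have hprod : hA.eigenvalues 0 * hA.eigenvalues 1 = d := by
    have := hA.det_eq_prod_eigenvalues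
    rw [hdet, Fin.prod_univ_two] at this
    have h2 := congrArg Complex.re this
    simpa using h2.symm
  set e0 := hA.eigenvalues 0
  set e1 := hA.eigenvalues 1
  have hvn : vN A = -(e0 * Real.logb 2 e0 + e1 * Real.logb 2 e1) := by
    rw [vN, dif_pos hA, Fin.sum_univ_two]
  have hsq : 1 - 4 * d = (e0 - e1) ^ 2 := by nlinarith [hsum, hprod]
  rcases le_total e1 e0 with h | h
  · have hs : Real.sqrt (1 - 4 * d) = e0 - e1 := by
      rw [hsq, Real.sqrt_sq (by linarith)]
    rw [hs, hvn, binEnt, show (1 + (e0 - e1)) / 2 = e0 by linarith,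
      show 1 - e0 = e1 by linarith]
    ring
  · have hs : Real.sqrt (1 - 4 * d) = e1 - e0 := by
      rw [hsq, Real.sqrt_sq_eq_abs, abs_of_nonpos (by linarith), neg_sub]
    rw [hs, hvn, binEnt, show (1 + (e1 - e0)) / 2 = e1 by linarith,
      show 1 - e1 = e0 by linarith]
    ring

lemma lam0_bloch (p0 p3 : ℝ) (hpos : 0 < p0 + p3) (x y z : ℝ) :
    lam0 p0 p3 (blochState x y z) =
      !![(((1 + z) / 2 : ℝ) : ℂ), (((p0 - p3) / (p0 + p3) : ℝ) : ℂ) * ((x : ℂ) - (y : ℂ) * Complex.I) / 2;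
         (((p0 - p3) / (p0 + p3) : ℝ) : ℂ) * ((x : ℂ) + (y : ℂ) * Complex.I) / 2, (((1 - z) / 2 : ℝ) : ℂ)] := by
  have h0 : ((p0 : ℂ) + (p3 : ℂ)) ≠ 0 := by
    rw [show ((p0 : ℂ) + (p3 : ℂ)) = ((p0 + p3 : ℝ) : ℂ) by push_cast; ring]
    exact_mod_cast hpos.ne'
  have hb : blochState x y z =
      !![(1 + (z:ℂ)) / 2, ((x:ℂ) - (y:ℂ) * Complex.I) / 2;
         ((x:ℂ) + (y:ℂ) * Complex.I) / 2, (1 - (z:ℂ)) / 2] := by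
    ext i j
    fin_cases i <;> fin_cases j <;>
      · simp [blochState, PX, PY, PZ, Matrix.one_apply]
        ring
  rw [lam0, hb]
  ext i j
  fin_cases i <;> fin_cases j <;>
      simp [PZ, Matrix.mul_apply, Fin.sum_univ_two] <;> push_cast <;>
      (try field_simp) <;> ring

lemma herm_A1 (k x y z : ℝ) :
    (!![(((1 + z) / 2 : ℝ) : ℂ), ((k : ℝ) : ℂ) * ((x : ℂ) - (y : ℂ) * Complex.I) / 2;
        ((k : ℝ) : ℂ) * ((x : ℂ) + (y : ℂ) * Complex.I) / 2, (((1 - z) / 2 : ℝ) : ℂ)]).IsHermitian := by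
  rw [Matrix.IsHermitian]
  ext i j
  fin_cases i <;> fin_cases j <;>
    simp [Matrix.conjTranspose_apply, Complex.conj_ofReal, map_div₀] <;> ring_nf <;> simp

lemma herm_A2 (p0 p3 z : ℝ) : (lam0c p0 p3 z).IsHermitian := by
  rw [Matrix.IsHermitian]
  ext i j
  fin_cases i <;> fin_cases j <;>
    simp [lam0c, Matrix.conjTranspose_apply, Complex.conj_ofReal]

lemma trace_A1 (k x y z : ℝ) :
    Matrix.trace (!![(((1 + z) / 2 : ℝ) : ℂ), ((k : ℝ) : ℂ) * ((x : ℂ) - (y : ℂ) * Complex.I) / 2;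
        ((k : ℝ) : ℂ) * ((x : ℂ) + (y : ℂ) * Complex.I) / 2, (((1 - z) / 2 : ℝ) : ℂ)]) = 1 := by
  rw [Matrix.trace_fin_two_of]
  push_cast
  ring

lemma det_A1 (k x y z : ℝ) :
    Matrix.det (!![(((1 + z) / 2 : ℝ) : ℂ), ((k : ℝ) : ℂ) * ((x : ℂ) - (y : ℂ) * Complex.I) / 2;
        ((k : ℝ) : ℂ) * ((x : ℂ) + (y : ℂ) * Complex.I) / 2, (((1 - z) / 2 : ℝ) : ℂ)])
      = (((1 - (k ^ 2 * (x ^ 2 + y ^ 2) + z ^ 2)) / 4 : ℝ) : ℂ) := by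
  rw [Matrix.det_fin_two_of]
  push_cast
  linear_combination ((k : ℂ)) ^ 2 * ((y : ℂ)) ^ 2 / 4 * Complex.I_sq

lemma trace_A2 (p0 p3 : ℝ) (hpos : 0 < p0 + p3) (z : ℝ) : Matrix.trace (lam0c p0 p3 z) = 1 := by
  rw [lam0c, Matrix.trace_fin_two_of, ← Complex.ofReal_add]
  rw [show p0 / (p0 + p3) + p3 / (p0 + p3) = 1 by field_simp]
  norm_num

lemma det_A2 (p0 p3 : ℝ) (h0 : 0 ≤ p0) (h3 : 0 ≤ p3) (hpos : 0 < p0 + p3) (z : ℝ) :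
    Matrix.det (lam0c p0 p3 z)
      = (((1 - ((p0 / (p0 + p3) - p3 / (p0 + p3)) ^ 2
          + 4 * (p0 / (p0 + p3)) * (p3 / (p0 + p3)) * z ^ 2)) / 4 : ℝ) : ℂ) := by
  rw [lam0c, Matrix.det_fin_two_of]
  rw [show ((p0 / (p0 + p3) : ℝ) : ℂ) * ((p3 / (p0 + p3) : ℝ) : ℂ) -
      ((Real.sqrt (p0 * p3) / (p0 + p3) * z : ℝ) : ℂ) * ((Real.sqrt (p0 * p3) / (p0 + p3) * z : ℝ) : ℂ)
      = ((p0 / (p0 + p3) * (p3 / (p0 + p3)) - (Real.sqrt (p0 * p3) / (p0 + p3) * z) ^ 2 : ℝ) : ℂ) by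

    push_cast; ring]
  norm_cast
  have hab : p0 / (p0 + p3) + p3 / (p0 + p3) = 1 := by field_simp
  have hsq : (Real.sqrt (p0 * p3) / (p0 + p3) * z) ^ 2
      = (p0 / (p0 + p3)) * (p3 / (p0 + p3)) * z ^ 2 := by
    rw [mul_pow, div_pow, Real.sq_sqrt (mul_nonneg h0 h3)]
    field_simp
  rw [hsq]
  field_simp
  ring

lemma binEnt_eq (t : ℝ) : binEnt t = Real.binEntropy t / Real.log 2 := by
  simp [binEnt, Real.binEntropy, Real.logb, Real.log_inv]
  ring

lemma binEnt_le_one (t : ℝ) : binEnt t ≤ 1 := by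
  rw [binEnt_eq, div_le_one (Real.log_pos one_lt_two)]
  exact Real.binEntropy_le_log_two

lemma binEnt_antitoneOn : AntitoneOn binEnt (Set.Icc 2⁻¹ 1) := by
  intro a ha b hb hab
  rw [binEnt_eq, binEnt_eq]
  exact div_le_div_of_nonneg_right (Real.binEntropy_strictAntiOn.antitoneOn ha hb hab)
    (Real.log_pos one_lt_two).le

-- artanh-type bound
lemma two_mul_le_log_div (s : ℝ) (h0 : 0 ≤ s) (h1 : s < 1) :
    2 * s ≤ Real.log (1 + s) - Real.log (1 - s) := by
  rcases eq_or_lt_of_le h0 with rfl | hs0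
  · simp
  have key : ∀ t ∈ Set.Icc (0:ℝ) s, HasDerivAt (fun u => Real.log (1 + u) - Real.log (1 - u) - 2 * u)
      (1 / (1 + t) + 1 / (1 - t) - 2) t := by
    intro t ht
    have ht0 : (0:ℝ) ≤ t := ht.1
    have ht1 : t < 1 := lt_of_le_of_lt ht.2 h1
    have hp : (1 + t) ≠ 0 := by linarith
    have hm : (1 - t) ≠ 0 := by linarith
    have d1 : HasDerivAt (fun u : ℝ => Real.log (1 + u)) (1 / (1 + t)) t := by
      simpa using (HasDerivAt.log ((hasDerivAt_id t).const_add 1) hp)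
    have d2 : HasDerivAt (fun u : ℝ => Real.log (1 - u)) (-1 / (1 - t)) t := by
      simpa using (HasDerivAt.log ((hasDerivAt_id t).const_sub 1) hm)
    have d3 : HasDerivAt (fun u : ℝ => 2 * u) 2 t := by
      simpa using (hasDerivAt_id t).const_mul 2
    have := (d1.sub d2).sub d3
    refine this.congr_deriv ?_
    ring
  have mono : MonotoneOn (fun u => Real.log (1 + u) - Real.log (1 - u) - 2 * u)
      (Set.Icc (0:ℝ) s) := by
    apply monotoneOn_of_deriv_nonneg (convex_Icc 0 s)
    · exact ContinuousOn.congr (continuousOn_of_forall_continuousAt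
        (fun t ht => (key t ht).continuousAt)) (fun x hx => rfl)
    · intro t ht
      rw [interior_Icc] at ht
      exact (key t (Set.mem_Icc.mpr ⟨le_of_lt ht.1, le_of_lt ht.2⟩)).differentiableAt.differentiableWithinAt
    · intro t ht
      rw [interior_Icc] at ht
      rw [(key t (Set.mem_Icc.mpr ⟨le_of_lt ht.1, le_of_lt ht.2⟩)).deriv]
      have ht1 : t < 1 := lt_trans ht.2 h1
      have hp : (0:ℝ) < 1 + t := by linarith [ht.1]
      have hm : (0:ℝ) < 1 - t := by linarith
      have e : 1 / (1 + t) + 1 / (1 - t) - 2 = 2 * t ^ 2 / ((1 + t) * (1 - t)) := by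
        field_simp
        ring
      rw [e]
      exact div_nonneg (by positivity) (by positivity)
  have := mono (Set.left_mem_Icc.mpr h0) (Set.right_mem_Icc.mpr h0) h0
  simp at this
  linarith

def phiF (r : ℝ) : ℝ := binEnt ((1 + Real.sqrt r) / 2)

lemma binEnt_continuous : Continuous binEnt := by
  have : binEnt = fun t => Real.binEntropy t / Real.log 2 := funext binEnt_eq
  rw [this]
  exact Real.binEntropy_continuous.div_const _

lemma phiF_continuous : Continuous phiF :=
  binEnt_continuous.comp (by continuity)

lemma phiF_zero : phiF 0 = 1 := by
  rw [phiF, Real.sqrt_zero, binEnt_eq]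
  norm_num
  rw [show (1:ℝ)/2 = 2⁻¹ by norm_num, Real.binEntropy_two_inv,
    div_self (Real.log_pos one_lt_two).ne']

lemma phiF_le_one (r : ℝ) : phiF r ≤ 1 := binEnt_le_one _

lemma phiF_antitoneOn : AntitoneOn phiF (Set.Icc 0 1) := by
  intro a ha b hb hab
  have h1 : Real.sqrt a ≤ Real.sqrt b := Real.sqrt_le_sqrt hab
  have h2 : Real.sqrt b ≤ 1 := Real.sqrt_le_one.mpr hb.2
  have h3 : (0:ℝ) ≤ Real.sqrt a := Real.sqrt_nonneg a
  exact binEnt_antitoneOn (by constructor <;> [linarith; linarith])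
    (by constructor <;> [linarith; linarith]) (by linarith)

lemma hasDerivAt_phiF {r : ℝ} (h0 : 0 < r) (h1 : r < 1) :
    HasDerivAt phiF
      ((Real.log (1 - Real.sqrt r) - Real.log (1 + Real.sqrt r))
        / (4 * Real.sqrt r * Real.log 2)) r := by
  set s := Real.sqrt r with hsdef
  have hs0 : 0 < s := Real.sqrt_pos.mpr h0
  have hs1 : s < 1 := by
    rw [show (1:ℝ) = Real.sqrt 1 by simp [Real.sqrt_one]]
    exact Real.sqrt_lt_sqrt h0.le h1
  have hinner : HasDerivAt (fun u => (1 + Real.sqrt u) / 2) (1 / (2 * s) / 2) r :=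
    ((Real.hasDerivAt_sqrt h0.ne').const_add 1).div_const 2
  have hp0 : (1 + s) / 2 ≠ 0 := by positivity
  have hp1 : (1 + s) / 2 ≠ 1 := by intro h; nlinarith
  have hb := (Real.hasDerivAt_binEntropy hp0 hp1).comp r hinner
  have hphi : phiF = fun u => Real.binEntropy ((1 + Real.sqrt u) / 2) / Real.log 2 :=
    funext fun t => binEnt_eq _
  rw [hphi]
  refine (hb.div_const (Real.log 2)).congr_deriv ?_
  symm
  rw [show 1 - (1 + s) / 2 = (1 - s) / 2 by ring,
    Real.log_div (by linarith) two_ne_zero, Real.log_div (by linarith) two_ne_zero]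
  have hl2 : Real.log 2 ≠ 0 := (Real.log_pos one_lt_two).ne'
  field_simp
  ring

def chiF (s : ℝ) : ℝ := (s⁻¹ - s) * (Real.log (1 + s) - Real.log (1 - s))

lemma hasDerivAt_chiF {s : ℝ} (h0 : 0 < s) (h1 : s < 1) :
    HasDerivAt chiF
      (2 / s - (1 / s ^ 2 + 1) * (Real.log (1 + s) - Real.log (1 - s))) s := by
  have hp : (1 + s) ≠ 0 := by linarith
  have hm : (1 - s) ≠ 0 := by linarith
  have d0 : HasDerivAt (fun x : ℝ => x⁻¹ - x) (-(s ^ 2)⁻¹ - 1) s :=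
    (hasDerivAt_inv h0.ne').sub (hasDerivAt_id s)
  have d1 : HasDerivAt (fun x : ℝ => Real.log (1 + x)) (1 / (1 + s)) s := by
    simpa using (HasDerivAt.log ((hasDerivAt_id s).const_add 1) hp)
  have d2 : HasDerivAt (fun x : ℝ => Real.log (1 - x)) (-1 / (1 - s)) s := by
    simpa using (HasDerivAt.log ((hasDerivAt_id s).const_sub 1) hm)
  have := d0.mul (d1.sub d2)
  refine this.congr_deriv ?_
  symm
  have e : 1 / (1 + s) - -1 / (1 - s) = 2 / ((1 + s) * (1 - s)) := by
    field_simp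
    ring
  simp only [e, Pi.sub_apply]
  field_simp
  ring

lemma chiF_antitoneOn : AntitoneOn chiF (Set.Ioo 0 1) := by
  apply antitoneOn_of_deriv_nonpos (convex_Ioo 0 1)
  · exact ContinuousOn.congr (continuousOn_of_forall_continuousAt
      (fun t ht => (hasDerivAt_chiF ht.1 ht.2).continuousAt)) (fun x hx => rfl)
  · rw [interior_Ioo]
    intro t ht
    exact (hasDerivAt_chiF ht.1 ht.2).differentiableAt.differentiableWithinAt
  · rw [interior_Ioo]
    intro t ht
    rw [(hasDerivAt_chiF ht.1 ht.2).deriv]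
    have hL : 2 * t ≤ Real.log (1 + t) - Real.log (1 - t) :=
      two_mul_le_log_div t ht.1.le ht.2
    have h2 : (1 / t ^ 2 + 1) * (2 * t) ≤
        (1 / t ^ 2 + 1) * (Real.log (1 + t) - Real.log (1 - t)) :=
      mul_le_mul_of_nonneg_left hL (by positivity)
    have e : (1 / t ^ 2 + 1) * (2 * t) = 2 / t + 2 * t := by
      have ht0 : t ≠ 0 := ne_of_gt ht.1
      field_simp
    nlinarith [ht.1]

lemma main_ineq (c u : ℝ) (hc0 : 0 ≤ c) (hc1 : c ≤ 1) (hu0 : 0 ≤ u) (hu1 : u ≤ 1) :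
    phiF u - phiF (c + (1 - c) * u) ≤ 1 - phiF c := by
  rcases eq_or_lt_of_le hc1 with rfl | hc1'
  · rw [show (1 : ℝ) + (1 - 1) * u = 1 by ring]
    linarith [phiF_le_one u]
  have gderiv : ∀ t ∈ Set.Ioo (0:ℝ) 1,
      HasDerivAt (fun t => phiF t - phiF (c + (1 - c) * t))
        ((Real.log (1 - Real.sqrt t) - Real.log (1 + Real.sqrt t))
            / (4 * Real.sqrt t * Real.log 2)
          - (Real.log (1 - Real.sqrt (c + (1 - c) * t))
              - Real.log (1 + Real.sqrt (c + (1 - c) * t)))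
            / (4 * Real.sqrt (c + (1 - c) * t) * Real.log 2) * (1 - c)) t := by
    intro t ht
    have hv0 : 0 < c + (1 - c) * t := by nlinarith [ht.1]
    have hv1 : c + (1 - c) * t < 1 := by nlinarith [ht.2]
    have hlin : HasDerivAt (fun t : ℝ => c + (1 - c) * t) (1 - c) t := by
      have h' := ((hasDerivAt_id t).const_mul (1 - c)).const_add c
      exact h'.congr_deriv (mul_one _)
    have hc := (hasDerivAt_phiF hv0 hv1).comp t hlin
    exact (hasDerivAt_phiF ht.1 ht.2).sub hc
  have hg : AntitoneOn (fun t => phiF t - phiF (c + (1 - c) * t)) (Set.Icc 0 1) := by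
    apply antitoneOn_of_deriv_nonpos (convex_Icc 0 1)
    · exact (phiF_continuous.sub (phiF_continuous.comp (by continuity))).continuousOn
    · rw [interior_Icc]
      intro t ht
      exact (gderiv t ht).differentiableAt.differentiableWithinAt
    · rw [interior_Icc]
      intro t ht
      rw [(gderiv t ht).deriv]
      -- notation
      set v := c + (1 - c) * t with hvdef
      have hv0 : 0 < v := by nlinarith [ht.1]
      have hv1 : v < 1 := by nlinarith [ht.2]
      set s := Real.sqrt t with hsdef
      set w := Real.sqrt v with hwdef
      have hs0 : 0 < s := Real.sqrt_pos.mpr ht.1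
      have hw0 : 0 < w := Real.sqrt_pos.mpr hv0
      have hs1 : s < 1 := by
        rw [hsdef, show (1:ℝ) = Real.sqrt 1 by simp]
        exact Real.sqrt_lt_sqrt ht.1.le ht.2
      have hw1 : w < 1 := by
        rw [hwdef, show (1:ℝ) = Real.sqrt 1 by simp]
        exact Real.sqrt_lt_sqrt hv0.le hv1
      have hs2 : s ^ 2 = t := Real.sq_sqrt ht.1.le
      have hw2 : w ^ 2 = v := Real.sq_sqrt hv0.le
      have hsw : s ≤ w := Real.sqrt_le_sqrt (by nlinarith [ht.2])
      have hchi : chiF w ≤ chiF s :=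
        chiF_antitoneOn ⟨hs0, hs1⟩ ⟨hw0, hw1⟩ hsw
      set Ls := Real.log (1 + s) - Real.log (1 - s) with hLs
      set Lw := Real.log (1 + w) - Real.log (1 - w) with hLw
      have h1s : 0 < 1 - s ^ 2 := by nlinarith
      have hwv : 1 - w ^ 2 = (1 - c) * (1 - s ^ 2) := by rw [hw2, hs2]; ring
      have e1 : chiF w = (1 - s ^ 2) * ((1 - c) * (Lw / w)) := by
        rw [chiF, ← hLw, show w⁻¹ - w = (1 - w ^ 2) / w by field_simp, hwv]
        ring
      have e2 : chiF s = (1 - s ^ 2) * (Ls / s) := by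
        rw [chiF, ← hLs, show s⁻¹ - s = (1 - s ^ 2) / s by field_simp]
        ring
      rw [e1, e2] at hchi
      have hkey : (1 - c) * (Lw / w) ≤ Ls / s := (mul_le_mul_iff_right₀ h1s).mp hchi
      have h6 := mul_le_mul_of_nonneg_right hkey
        (show (0:ℝ) ≤ 1 / (4 * Real.log 2) by positivity)
      have hl2 : Real.log 2 ≠ 0 := (Real.log_pos one_lt_two).ne'
      have hA : (Real.log (1 - s) - Real.log (1 + s)) / (4 * s * Real.log 2)
          - (Real.log (1 - w) - Real.log (1 + w)) / (4 * w * Real.log 2) * (1 - c)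
          = (1 - c) * (Lw / w) * (1 / (4 * Real.log 2)) - Ls / s * (1 / (4 * Real.log 2)) := by
        rw [hLs, hLw]
        field_simp
        ring
      rw [hA]
      linarith [h6]
  have h0m : (0:ℝ) ∈ Set.Icc (0:ℝ) 1 := by constructor <;> norm_num
  have hum : u ∈ Set.Icc (0:ℝ) 1 := ⟨hu0, hu1⟩
  have := hg h0m hum hu0
  simp only at this
  rw [show c + (1 - c) * 0 = c by ring, phiF_zero] at this
  exact this

lemma binEnt_one_sub (t : ℝ) : binEnt (1 - t) = binEnt t := by
  simp only [binEnt, sub_sub_cancel]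
  ring

lemma binEnt_max (a b : ℝ) (hab : a + b = 1) :
    binEnt ((1 + Real.sqrt ((a - b) ^ 2)) / 2) = binEnt a := by
  rw [Real.sqrt_sq_eq_abs]
  rcases le_total b a with h | h
  · rw [abs_of_nonneg (by linarith), show (1 + (a - b)) / 2 = a by linarith]
  · rw [abs_of_nonpos (by linarith), neg_sub, show (1 + (b - a)) / 2 = b by linarith,
      show b = 1 - a by linarith, binEnt_one_sub]

/-- Coherent information of `Λ₀`: for every Bloch state, with `κ = (p₀-p₃)/(p₀+p₃)`,
`α² = p₀/(p₀+p₃)`, `β² = p₃/(p₀+p₃)`,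
`S(Λ₀(ρ)) - S(Λ₀ᶜ(ρ)) = h(½(1+√(κ²(x²+y²)+z²))) - h(½(1+√((α²-β²)²+4α²β²z²)))
  ≤ 1 - h(p₀/(p₀+p₃))`,
with equality at the maximally mixed state; hence
`max_ρ [S(Λ₀(ρ)) - S(Λ₀ᶜ(ρ))] = 1 - h(p₀/(p₀+p₃))`. -/
theorem lam0_coherent_information (p0 p3 : ℝ) (h0 : 0 ≤ p0) (h3 : 0 ≤ p3)
    (hpos : 0 < p0 + p3) :
    (∀ x y z : ℝ, x ^ 2 + y ^ 2 + z ^ 2 ≤ 1 →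
        vN (lam0 p0 p3 (blochState x y z)) - vN (lam0c p0 p3 z) =
          binEnt ((1 + Real.sqrt (((p0 - p3) / (p0 + p3)) ^ 2 * (x ^ 2 + y ^ 2) + z ^ 2)) / 2) -
            binEnt ((1 + Real.sqrt ((p0 / (p0 + p3) - p3 / (p0 + p3)) ^ 2 +
              4 * (p0 / (p0 + p3)) * (p3 / (p0 + p3)) * z ^ 2)) / 2)) ∧
    (∀ x y z : ℝ, x ^ 2 + y ^ 2 + z ^ 2 ≤ 1 →
        vN (lam0 p0 p3 (blochState x y z)) - vN (lam0c p0 p3 z) ≤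
          1 - binEnt (p0 / (p0 + p3))) ∧
    vN (lam0 p0 p3 (blochState 0 0 0)) - vN (lam0c p0 p3 0) = 1 - binEnt (p0 / (p0 + p3)) ∧
    IsGreatest
      {d : ℝ | ∃ x y z : ℝ, x ^ 2 + y ^ 2 + z ^ 2 ≤ 1 ∧
        d = vN (lam0 p0 p3 (blochState x y z)) - vN (lam0c p0 p3 z)}
      (1 - binEnt (p0 / (p0 + p3))) := by
  have hS := hpos.ne'
  set k : ℝ := (p0 - p3) / (p0 + p3) with hkdef
  set A : ℝ := p0 / (p0 + p3) with hAdef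
  set B : ℝ := p3 / (p0 + p3) with hBdef
  have hab : A + B = 1 := by rw [hAdef, hBdef]; field_simp
  have hk : k = A - B := sub_div p0 p3 (p0 + p3)
  have hk2 : k ^ 2 ≤ 1 := by
    rw [hkdef, div_pow, div_le_one (by positivity)]
    nlinarith [mul_nonneg h0 h3]
  have part1 : ∀ x y z : ℝ, x ^ 2 + y ^ 2 + z ^ 2 ≤ 1 →
      vN (lam0 p0 p3 (blochState x y z)) - vN (lam0c p0 p3 z) =
        binEnt ((1 + Real.sqrt (k ^ 2 * (x ^ 2 + y ^ 2) + z ^ 2)) / 2) -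
          binEnt ((1 + Real.sqrt ((A - B) ^ 2 + 4 * A * B * z ^ 2)) / 2) := by
    intro x y z hxyz
    have e1 : vN (lam0 p0 p3 (blochState x y z)) =
        binEnt ((1 + Real.sqrt (k ^ 2 * (x ^ 2 + y ^ 2) + z ^ 2)) / 2) := by
      rw [lam0_bloch p0 p3 hpos x y z,
        vN_eq_binEnt (herm_A1 k x y z) _ (trace_A1 k x y z) (det_A1 k x y z),
        show (1:ℝ) - 4 * ((1 - (k ^ 2 * (x ^ 2 + y ^ 2) + z ^ 2)) / 4)
          = k ^ 2 * (x ^ 2 + y ^ 2) + z ^ 2 by ring]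
    have e2 : vN (lam0c p0 p3 z) =
        binEnt ((1 + Real.sqrt ((A - B) ^ 2 + 4 * A * B * z ^ 2)) / 2) := by
      rw [vN_eq_binEnt (herm_A2 p0 p3 z) _ (trace_A2 p0 p3 hpos z) (det_A2 p0 p3 h0 h3 hpos z),
        show (1:ℝ) - 4 * ((1 - ((A - B) ^ 2 + 4 * A * B * z ^ 2)) / 4)
          = (A - B) ^ 2 + 4 * A * B * z ^ 2 by ring]
    rw [e1, e2]
  have part2 : ∀ x y z : ℝ, x ^ 2 + y ^ 2 + z ^ 2 ≤ 1 →
      vN (lam0 p0 p3 (blochState x y z)) - vN (lam0c p0 p3 z) ≤ 1 - binEnt A := by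
    intro x y z hxyz
    rw [part1 x y z hxyz]
    have hz21 : z ^ 2 ≤ 1 := by nlinarith [sq_nonneg x, sq_nonneg y]
    have hprod : 0 ≤ k ^ 2 * (x ^ 2 + y ^ 2) :=
      mul_nonneg (sq_nonneg k) (by positivity)
    have hz2R : z ^ 2 ≤ k ^ 2 * (x ^ 2 + y ^ 2) + z ^ 2 := by linarith
    have hR1le : k ^ 2 * (x ^ 2 + y ^ 2) + z ^ 2 ≤ 1 := by
      nlinarith [mul_nonneg (sub_nonneg.mpr hk2) (add_nonneg (sq_nonneg x) (sq_nonneg y))]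
    have hR2 : (A - B) ^ 2 + 4 * A * B * z ^ 2 = k ^ 2 + (1 - k ^ 2) * z ^ 2 := by
      rw [hk]
      linear_combination (A + B + 1) * z ^ 2 * hab
    have step1 : phiF (k ^ 2 * (x ^ 2 + y ^ 2) + z ^ 2) ≤ phiF (z ^ 2) :=
      phiF_antitoneOn ⟨sq_nonneg z, hz21⟩ ⟨by positivity, hR1le⟩ hz2R
    have step2 : phiF (z ^ 2) - phiF (k ^ 2 + (1 - k ^ 2) * z ^ 2) ≤ 1 - phiF (k ^ 2) :=
      main_ineq (k ^ 2) (z ^ 2) (sq_nonneg k) hk2 (sq_nonneg z) hz21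
    have hphik : phiF (k ^ 2) = binEnt A := by
      rw [phiF, hk]
      exact binEnt_max A B hab
    show phiF (k ^ 2 * (x ^ 2 + y ^ 2) + z ^ 2)
        - phiF ((A - B) ^ 2 + 4 * A * B * z ^ 2) ≤ 1 - binEnt A
    rw [hR2]
    linarith
  have part3 : vN (lam0 p0 p3 (blochState 0 0 0)) - vN (lam0c p0 p3 0) = 1 - binEnt A := by
    rw [part1 0 0 0 (by norm_num),
      show k ^ 2 * ((0:ℝ) ^ 2 + 0 ^ 2) + 0 ^ 2 = 0 by ring,
      show (A - B) ^ 2 + 4 * A * B * (0:ℝ) ^ 2 = (A - B) ^ 2 by ring,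
      binEnt_max A B hab]
    have := phiF_zero
    rw [phiF, Real.sqrt_zero] at this
    rw [Real.sqrt_zero, this]
  refine ⟨?_, part2, part3, ⟨0, 0, 0, by norm_num, part3.symm⟩, ?_⟩
  · intro x y z hxyz
    have := part1 x y z hxyz
    rw [hkdef] at this
    exact this
  · rintro d ⟨x, y, z, hxyz, rfl⟩
    exact part2 x y z hxyz

end
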